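/- Let R' be an algebraic curvature tensor on ℝ³ with Ricci tensor ρ' and scalar curvature τ'. If (1/4)|R'|² − |ρ'|² + (τ')²/4 = 0, then for all a,b,c,d ∈ {1,2,3}: R'_{abcd} = ρ'_{ad} δ_{bc} − ρ'_{ac} δ_{bd} + δ_{ad} ρ'_{bc} − δ_{ac} ρ'_{bd} − (τ'/2)(δ_{ad} δ_{bc} − δ_{ac} δ_{bd}). -/
import Mathlib


/-- Ricci tensor of an algebraic curvature tensor, `ρ i j = ∑ a, R a i j a`
(sign convention so that ρ is the usual Ricci contraction). -/
def Ric {n : ℕ} (R : Fin n → Fin n → Fin n → Fin n → ℝ) (i j : Fin n) : ℝ :=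
  ∑ a, R a i j a

/-- Scalar curvature `τ = ∑ i, ρ i i`. -/
def scalCurv {n : ℕ} (R : Fin n → Fin n → Fin n → Fin n → ℝ) : ℝ :=
  ∑ i, Ric R i i

/-- Squared norm of the curvature tensor, `|R|² = ∑ R_{ijkl}²`. -/
def normR2 {n : ℕ} (R : Fin n → Fin n → Fin n → Fin n → ℝ) : ℝ :=
  ∑ i, ∑ j, ∑ k, ∑ l, (R i j k l) ^ 2

/-- Squared norm of the Ricci tensor, `|ρ|² = ∑ ρ_{ij}²`. -/
def normRic2 {n : ℕ} (R : Fin n → Fin n → Fin n → Fin n → ℝ) : ℝ :=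
  ∑ i, ∑ j, (Ric R i j) ^ 2

/-- `R` is an algebraic curvature tensor: antisymmetry in the first and last pairs,
pair-interchange symmetry, and the first Bianchi identity. -/
def IsACT {n : ℕ} (R : Fin n → Fin n → Fin n → Fin n → ℝ) : Prop :=
  (∀ i j k l, R i j k l = - R j i k l) ∧
  (∀ i j k l, R i j k l = - R i j l k) ∧
  (∀ i j k l, R i j k l = R k l i j) ∧
  (∀ i j k l, R i j k l + R j k i l + R k i j l = 0)

/-- Kronecker delta. -/
def kron {n : ℕ} (i j : Fin n) : ℝ := if i = j then 1 else 0

set_option maxHeartbeats 4000000 in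
theorem dim3_curvature_from_ricci (R' : Fin 3 → Fin 3 → Fin 3 → Fin 3 → ℝ) (hR : IsACT R')
    (h : (1 / 4) * normR2 R' - normRic2 R' + (scalCurv R') ^ 2 / 4 = 0) :
    ∀ a b c d : Fin 3, R' a b c d =
        Ric R' a d * kron b c - Ric R' a c * kron b d + kron a d * Ric R' b c
          - kron a c * Ric R' b d
          - (scalCurv R' / 2) * (kron a d * kron b c - kron a c * kron b d) := by
  obtain ⟨h1, h2, h3, _h4⟩ := hR
  have e0000 : R' 0 0 0 0 = (0:ℝ) := by linarith [h1 0 0 0 0]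
  have e0001 : R' 0 0 0 1 = (0:ℝ) := by linarith [h1 0 0 0 1]
  have e0002 : R' 0 0 0 2 = (0:ℝ) := by linarith [h1 0 0 0 2]
  have e0010 : R' 0 0 1 0 = (0:ℝ) := by linarith [h1 0 0 1 0]
  have e0011 : R' 0 0 1 1 = (0:ℝ) := by linarith [h1 0 0 1 1]
  have e0012 : R' 0 0 1 2 = (0:ℝ) := by linarith [h1 0 0 1 2]
  have e0020 : R' 0 0 2 0 = (0:ℝ) := by linarith [h1 0 0 2 0]
  have e0021 : R' 0 0 2 1 = (0:ℝ) := by linarith [h1 0 0 2 1]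
  have e0022 : R' 0 0 2 2 = (0:ℝ) := by linarith [h1 0 0 2 2]
  have e0100 : R' 0 1 0 0 = (0:ℝ) := by linarith [h2 0 1 0 0]
  have e0110 : R' 0 1 1 0 = -R' 0 1 0 1 := by linarith [h2 0 1 1 0]
  have e0111 : R' 0 1 1 1 = (0:ℝ) := by linarith [h2 0 1 1 1]
  have e0120 : R' 0 1 2 0 = -R' 0 1 0 2 := by linarith [h2 0 1 2 0]
  have e0121 : R' 0 1 2 1 = -R' 0 1 1 2 := by linarith [h2 0 1 2 1]
  have e0122 : R' 0 1 2 2 = (0:ℝ) := by linarith [h2 0 1 2 2]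
  have e0200 : R' 0 2 0 0 = (0:ℝ) := by linarith [h2 0 2 0 0]
  have e0201 : R' 0 2 0 1 = R' 0 1 0 2 := by linarith [h3 0 2 0 1]
  have e0210 : R' 0 2 1 0 = -R' 0 1 0 2 := by linarith [h2 0 2 1 0, h3 0 2 0 1]
  have e0211 : R' 0 2 1 1 = (0:ℝ) := by linarith [h2 0 2 1 1]
  have e0220 : R' 0 2 2 0 = -R' 0 2 0 2 := by linarith [h2 0 2 2 0]
  have e0221 : R' 0 2 2 1 = -R' 0 2 1 2 := by linarith [h2 0 2 2 1]
  have e0222 : R' 0 2 2 2 = (0:ℝ) := by linarith [h2 0 2 2 2]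
  have e1000 : R' 1 0 0 0 = (0:ℝ) := by linarith [h2 1 0 0 0]
  have e1001 : R' 1 0 0 1 = -R' 0 1 0 1 := by linarith [h1 1 0 0 1]
  have e1002 : R' 1 0 0 2 = -R' 0 1 0 2 := by linarith [h1 1 0 0 2]
  have e1010 : R' 1 0 1 0 = R' 0 1 0 1 := by linarith [h1 1 0 1 0, h2 0 1 1 0]
  have e1011 : R' 1 0 1 1 = (0:ℝ) := by linarith [h2 1 0 1 1]
  have e1012 : R' 1 0 1 2 = -R' 0 1 1 2 := by linarith [h1 1 0 1 2]
  have e1020 : R' 1 0 2 0 = R' 0 1 0 2 := by linarith [h1 1 0 2 0, h2 0 1 2 0]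
  have e1021 : R' 1 0 2 1 = R' 0 1 1 2 := by linarith [h1 1 0 2 1, h2 0 1 2 1]
  have e1022 : R' 1 0 2 2 = (0:ℝ) := by linarith [h2 1 0 2 2]
  have e1100 : R' 1 1 0 0 = (0:ℝ) := by linarith [h1 1 1 0 0]
  have e1101 : R' 1 1 0 1 = (0:ℝ) := by linarith [h1 1 1 0 1]
  have e1102 : R' 1 1 0 2 = (0:ℝ) := by linarith [h1 1 1 0 2]
  have e1110 : R' 1 1 1 0 = (0:ℝ) := by linarith [h1 1 1 1 0]
  have e1111 : R' 1 1 1 1 = (0:ℝ) := by linarith [h1 1 1 1 1]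
  have e1112 : R' 1 1 1 2 = (0:ℝ) := by linarith [h1 1 1 1 2]
  have e1120 : R' 1 1 2 0 = (0:ℝ) := by linarith [h1 1 1 2 0]
  have e1121 : R' 1 1 2 1 = (0:ℝ) := by linarith [h1 1 1 2 1]
  have e1122 : R' 1 1 2 2 = (0:ℝ) := by linarith [h1 1 1 2 2]
  have e1200 : R' 1 2 0 0 = (0:ℝ) := by linarith [h2 1 2 0 0]
  have e1201 : R' 1 2 0 1 = R' 0 1 1 2 := by linarith [h3 1 2 0 1]
  have e1202 : R' 1 2 0 2 = R' 0 2 1 2 := by linarith [h3 1 2 0 2]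
  have e1210 : R' 1 2 1 0 = -R' 0 1 1 2 := by linarith [h2 1 2 1 0, h3 1 2 0 1]
  have e1211 : R' 1 2 1 1 = (0:ℝ) := by linarith [h2 1 2 1 1]
  have e1220 : R' 1 2 2 0 = -R' 0 2 1 2 := by linarith [h2 1 2 2 0, h3 1 2 0 2]
  have e1221 : R' 1 2 2 1 = -R' 1 2 1 2 := by linarith [h2 1 2 2 1]
  have e1222 : R' 1 2 2 2 = (0:ℝ) := by linarith [h2 1 2 2 2]
  have e2000 : R' 2 0 0 0 = (0:ℝ) := by linarith [h2 2 0 0 0]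
  have e2001 : R' 2 0 0 1 = -R' 0 1 0 2 := by linarith [h1 2 0 0 1, h3 0 2 0 1]
  have e2002 : R' 2 0 0 2 = -R' 0 2 0 2 := by linarith [h1 2 0 0 2]
  have e2010 : R' 2 0 1 0 = R' 0 1 0 2 := by linarith [h1 2 0 1 0, h2 0 2 1 0, h3 0 2 0 1]
  have e2011 : R' 2 0 1 1 = (0:ℝ) := by linarith [h2 2 0 1 1]
  have e2012 : R' 2 0 1 2 = -R' 0 2 1 2 := by linarith [h1 2 0 1 2]
  have e2020 : R' 2 0 2 0 = R' 0 2 0 2 := by linarith [h1 2 0 2 0, h2 0 2 2 0]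
  have e2021 : R' 2 0 2 1 = R' 0 2 1 2 := by linarith [h1 2 0 2 1, h2 0 2 2 1]
  have e2022 : R' 2 0 2 2 = (0:ℝ) := by linarith [h2 2 0 2 2]
  have e2100 : R' 2 1 0 0 = (0:ℝ) := by linarith [h2 2 1 0 0]
  have e2101 : R' 2 1 0 1 = -R' 0 1 1 2 := by linarith [h1 2 1 0 1, h3 1 2 0 1]
  have e2102 : R' 2 1 0 2 = -R' 0 2 1 2 := by linarith [h1 2 1 0 2, h3 1 2 0 2]
  have e2110 : R' 2 1 1 0 = R' 0 1 1 2 := by linarith [h1 2 1 1 0, h2 1 2 1 0, h3 1 2 0 1]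
  have e2111 : R' 2 1 1 1 = (0:ℝ) := by linarith [h2 2 1 1 1]
  have e2112 : R' 2 1 1 2 = -R' 1 2 1 2 := by linarith [h1 2 1 1 2]
  have e2120 : R' 2 1 2 0 = R' 0 2 1 2 := by linarith [h1 2 1 2 0, h2 1 2 2 0, h3 1 2 0 2]
  have e2121 : R' 2 1 2 1 = R' 1 2 1 2 := by linarith [h1 2 1 2 1, h2 1 2 2 1]
  have e2122 : R' 2 1 2 2 = (0:ℝ) := by linarith [h2 2 1 2 2]
  have e2200 : R' 2 2 0 0 = (0:ℝ) := by linarith [h1 2 2 0 0]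
  have e2201 : R' 2 2 0 1 = (0:ℝ) := by linarith [h1 2 2 0 1]
  have e2202 : R' 2 2 0 2 = (0:ℝ) := by linarith [h1 2 2 0 2]
  have e2210 : R' 2 2 1 0 = (0:ℝ) := by linarith [h1 2 2 1 0]
  have e2211 : R' 2 2 1 1 = (0:ℝ) := by linarith [h1 2 2 1 1]
  have e2212 : R' 2 2 1 2 = (0:ℝ) := by linarith [h1 2 2 1 2]
  have e2220 : R' 2 2 2 0 = (0:ℝ) := by linarith [h1 2 2 2 0]
  have e2221 : R' 2 2 2 1 = (0:ℝ) := by linarith [h1 2 2 2 1]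
  have e2222 : R' 2 2 2 2 = (0:ℝ) := by linarith [h1 2 2 2 2]
  have tri : ∀ x : Fin 3, x = 0 ∨ x = 1 ∨ x = 2 := by decide
  intro a b c d
  rcases tri a with rfl|rfl|rfl <;> rcases tri b with rfl|rfl|rfl <;>
    rcases tri c with rfl|rfl|rfl <;> rcases tri d with rfl|rfl|rfl <;>
    simp only [Ric, scalCurv, kron, Fin.sum_univ_three,
      e0000, e0001, e0002, e0010, e0011, e0012, e0020, e0021, e0022, e0100, e0110, e0111, e0120, e0121, e0122, e0200, e0201, e0210, e0211, e0220, e0221, e0222, e1000, e1001, e1002, e1010, e1011, e1012, e1020, e1021, e1022, e1100, e1101, e1102, e1110, e1111, e1112, e1120, e1121, e1122, e1200, e1201, e1202, e1210, e1211, e1220, e1221, e1222, e2000, e2001, e2002, e2010, e2011, e2012, e2020, e2021, e2022, e2100, e2101, e2102, e2110, e2111, e2112, e2120, e2121, e2122, e2200, e2201, e2202, e2210, e2211, e2212, e2220, e2221, e2222] <;>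
    (try simp (config := { decide := true }) only [if_true, if_false]) <;> linarith
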